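/- The Motzkin polynomial is not a sum of squares of polynomials: there exist no m ∈ ℕ and polynomials p₁,…,p_m ∈ ℝ[X,Y] such that X⁴Y² + X²Y⁴ − 3X²Y² + 1 = Σᵢ₌₁ᵐ pᵢ². -/

import Mathlib

open MvPolynomial

namespace MotzkinAux

open Finset

/-- the exponent finsupp `(i, j)` on two variables -/
noncomputable def m2 (i j : ℕ) : Fin 2 →₀ ℕ := Finsupp.single 0 i + Finsupp.single 1 j

@[simp] lemma m2_apply0 (i j : ℕ) : m2 i j 0 = i := by
  simp [m2, Finsupp.single_apply]

@[simp] lemma m2_apply1 (i j : ℕ) : m2 i j 1 = j := by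
  simp [m2, Finsupp.single_apply]

lemma fin2_ext {d e : Fin 2 →₀ ℕ} (h0 : d 0 = e 0) (h1 : d 1 = e 1) : d = e := by
  ext x
  fin_cases x <;> assumption

lemma m2_add (a b c d : ℕ) : m2 a b + m2 c d = m2 (a + c) (b + d) := by
  apply fin2_ext <;> simp

lemma m2_eq_iff {a b c d : ℕ} : m2 a b = m2 c d ↔ a = c ∧ b = d := by
  constructor
  · intro h
    constructor
    · have := DFunLike.congr_fun h (0 : Fin 2); simpa using this
    · have := DFunLike.congr_fun h (1 : Fin 2); simpa using this
  · rintro ⟨rfl, rfl⟩; rfl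

lemma deg2 (d : Fin 2 →₀ ℕ) : d.degree = d 0 + d 1 := by
  rw [Finsupp.degree_apply, Finset.sum_subset (Finset.subset_univ _)]
  · exact Fin.sum_univ_two d
  · intro x _ hx
    simpa using (Finsupp.notMem_support_iff.mp hx)

lemma sum2 (d : Fin 2 →₀ ℕ) : (d.sum fun _ e => e) = d 0 + d 1 := deg2 d

/-- a sum of squares of real polynomials vanishes only if each summand vanishes -/
lemma sos_eq_zero {n : ℕ} {r : Fin n → MvPolynomial (Fin 2) ℝ}
    (h : ∑ i, r i ^ 2 = 0) (i : Fin n) : r i = 0 := by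
  have key : ∀ x : Fin 2 → ℝ, eval x (r i) = 0 := by
    intro x
    have hx := congrArg (eval x) h
    rw [map_sum, map_zero] at hx
    simp only [map_pow] at hx
    have h0 : ∀ j ∈ Finset.univ, (0:ℝ) ≤ eval x (r j) ^ 2 := fun j _ => sq_nonneg _
    have := (Finset.sum_eq_zero_iff_of_nonneg h0).mp hx i (Finset.mem_univ i)
    exact pow_eq_zero_iff (two_ne_zero) |>.mp this
  exact MvPolynomial.funext (fun x => by simpa using key x)

/-- degree bound: if a polynomial of total degree at most 6 is a sum of squares,
each square root has total degree at most 3 -/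
lemma deg_le {n : ℕ} {p : Fin n → MvPolynomial (Fin 2) ℝ} {f : MvPolynomial (Fin 2) ℝ}
    (hf : f = ∑ i, p i ^ 2) (hfd : f.totalDegree ≤ 6) (i : Fin n) :
    (p i).totalDegree ≤ 3 := by
  by_contra hi
  push_neg at hi
  set D := Finset.univ.sup (fun j => (p j).totalDegree) with hD
  have hple : ∀ j, (p j).totalDegree ≤ D := fun j => by
    rw [hD]; exact Finset.le_sup (f := fun j => (p j).totalDegree) (Finset.mem_univ j)
  have hDi : (p i).totalDegree ≤ D := hple i
  have hD4 : 4 ≤ D := by omega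
  have hzero : ∑ j, (homogeneousComponent D (p j)) ^ 2 = 0 := by
    apply MvPolynomial.ext
    intro m
    rw [coeff_zero, coeff_sum]
    by_cases hm : m.degree = 2 * D
    · have h1 : ∑ j, coeff m (homogeneousComponent D (p j) ^ 2) = coeff m f := by
        rw [hf, coeff_sum]
        refine Finset.sum_congr rfl fun j _ => ?_
        rw [sq, sq, coeff_mul, coeff_mul]
        refine Finset.sum_congr rfl fun x hx => ?_
        obtain ⟨a, b⟩ := x
        rw [Finset.HasAntidiagonal.mem_antidiagonal] at hx
        have hdeg : a.degree + b.degree = 2 * D := by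
          have e0 := DFunLike.congr_fun hx 0
          have e1 := DFunLike.congr_fun hx 1
          simp only [Finsupp.add_apply] at e0 e1
          rw [deg2] at hm
          rw [deg2, deg2]
          omega
        by_cases ha : a.degree = D
        · have hb : b.degree = D := by omega
          simp [coeff_homogeneousComponent, ha, hb]
        · rcases Nat.lt_or_ge a.degree D with hlt | hge
          · have hbgt : D < b.degree := by omega
            have hcb : coeff b (p j) = 0 := by
              apply coeff_eq_zero_of_totalDegree_lt
              have hbd : (∑ i ∈ b.support, b i) = b.degree := rfl
              have := hple j
              omega
            simp [coeff_homogeneousComponent, ha, (by omega : ¬ b.degree = D), hcb]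
          · have hagt : D < a.degree := by omega
            have hca : coeff a (p j) = 0 := by
              apply coeff_eq_zero_of_totalDegree_lt
              have had : (∑ i ∈ a.support, a i) = a.degree := rfl
              have := hple j
              omega
            simp [coeff_homogeneousComponent, ha, hca]
      rw [h1]
      apply coeff_eq_zero_of_totalDegree_lt
      have : (∑ i ∈ m.support, m i) = m.degree := rfl
      omega
    · apply Finset.sum_eq_zero
      intro j _
      have hhom : IsHomogeneous (homogeneousComponent D (p j) ^ 2) (2 * D) := by
        rw [sq, two_mul]
        exact (homogeneousComponent_isHomogeneous D (p j)).mul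
          (homogeneousComponent_isHomogeneous D (p j))
      exact hhom.coeff_eq_zero hm
  obtain ⟨j, -, hj⟩ := Finset.exists_mem_eq_sup Finset.univ ⟨i, Finset.mem_univ i⟩
    (fun j => (p j).totalDegree)
  have hpj : p j ≠ 0 := by
    intro h0
    rw [h0, totalDegree_zero] at hj
    omega
  obtain ⟨m₀, hm₀s, hm₀⟩ := Finset.exists_mem_eq_sup ((p j).support)
    (support_nonempty.mpr hpj) (fun s => s.sum fun _ e => e)
  have hcm₀ : coeff m₀ (p j) ≠ 0 := mem_support_iff.mp hm₀s
  have hm₀D : m₀.degree = D := by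
    have h1 : (p j).totalDegree = m₀.sum fun _ e => e := hm₀
    rw [sum2] at h1
    rw [deg2]
    omega
  have hc : coeff m₀ (homogeneousComponent D (p j)) = coeff m₀ (p j) := by
    rw [coeff_homogeneousComponent, if_pos hm₀D]
  rw [sos_eq_zero hzero j, coeff_zero] at hc
  exact hcm₀ hc.symm

lemma sum_sq_coeff {n : ℕ} (p : Fin n → MvPolynomial (Fin 2) ℝ) (M H : Fin 2 →₀ ℕ)
    (hHM : H + H = M)
    (hz : ∀ i (a b : Fin 2 →₀ ℕ), a + b = M → ¬(a = H ∧ b = H) →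
      coeff a (p i) * coeff b (p i) = 0) :
    coeff M (∑ i, p i ^ 2) = ∑ i, (coeff H (p i)) ^ 2 := by
  rw [coeff_sum]
  refine Finset.sum_congr rfl fun i _ => ?_
  rw [sq, coeff_mul, Finset.sum_eq_single_of_mem (H, H) (Finset.HasAntidiagonal.mem_antidiagonal.mpr hHM)]
  · exact (sq _).symm
  · rintro ⟨a, b⟩ hab hne
    exact hz i a b (Finset.HasAntidiagonal.mem_antidiagonal.mp hab)
      (by rintro ⟨rfl, rfl⟩; exact hne rfl)

lemma chase_zero {n : ℕ} (p : Fin n → MvPolynomial (Fin 2) ℝ) (M H : Fin 2 →₀ ℕ)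
    (hHM : H + H = M)
    (hz : ∀ i (a b : Fin 2 →₀ ℕ), a + b = M → ¬(a = H ∧ b = H) →
      coeff a (p i) * coeff b (p i) = 0)
    (hM : coeff M (∑ i, p i ^ 2) = 0) :
    ∀ i, coeff H (p i) = 0 := by
  have h := (sum_sq_coeff p M H hHM hz).symm.trans hM
  intro i
  have := (Finset.sum_eq_zero_iff_of_nonneg (fun j _ => sq_nonneg (coeff H (p j)))).mp h i
    (Finset.mem_univ i)
  exact pow_eq_zero_iff two_ne_zero |>.mp this

end MotzkinAux

open MotzkinAux

/-- the Motzkin polynomial `X⁴Y² + X²Y⁴ − 3X²Y² + 1` is not a sum of squares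
of real polynomials. -/
theorem motzkin_not_sum_of_squares :
    ¬ ∃ (m : ℕ) (p : Fin m → MvPolynomial (Fin 2) ℝ),
      (X 0 : MvPolynomial (Fin 2) ℝ) ^ 4 * X 1 ^ 2 + X 0 ^ 2 * X 1 ^ 4
          - 3 * X 0 ^ 2 * X 1 ^ 2 + 1 = ∑ i, p i ^ 2 := by
  rintro ⟨n, p, h⟩
  set f : MvPolynomial (Fin 2) ℝ :=
    X 0 ^ 4 * X 1 ^ 2 + X 0 ^ 2 * X 1 ^ 4 - 3 * X 0 ^ 2 * X 1 ^ 2 + 1 with hfdef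
  -- normal form of the Motzkin polynomial
  have e1 : (X 0 : MvPolynomial (Fin 2) ℝ) ^ 4 * X 1 ^ 2 = monomial (m2 4 2) 1 := by
    rw [X_pow_eq_monomial, X_pow_eq_monomial, monomial_mul, one_mul]; rfl
  have e2 : (X 0 : MvPolynomial (Fin 2) ℝ) ^ 2 * X 1 ^ 4 = monomial (m2 2 4) 1 := by
    rw [X_pow_eq_monomial, X_pow_eq_monomial, monomial_mul, one_mul]; rfl
  have e3 : (3 : MvPolynomial (Fin 2) ℝ) * X 0 ^ 2 * X 1 ^ 2 = monomial (m2 2 2) 3 := by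
    rw [X_pow_eq_monomial, X_pow_eq_monomial]
    rw [show (3 : MvPolynomial (Fin 2) ℝ) = C 3 from
      (map_ofNat (C : ℝ →+* MvPolynomial (Fin 2) ℝ) 3).symm]
    rw [mul_assoc, monomial_mul, one_mul, C_mul_monomial, mul_one]; rfl
  have e4 : (1 : MvPolynomial (Fin 2) ℝ) = monomial (m2 0 0) 1 := by
    rw [show m2 0 0 = 0 from fin2_ext (by simp) (by simp)]
    rw [monomial_zero', C_1]
  have hfeq : f = monomial (m2 4 2) 1 + monomial (m2 2 4) 1
      + monomial (m2 2 2) (-3) + monomial (m2 0 0) 1 := by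
    rw [hfdef, e1, e2, e3, ← e4, map_neg]
    ring
  have hfd : f.totalDegree ≤ 6 := by
    have hm : ∀ (i j : ℕ) (c : ℝ), i + j ≤ 6 →
        (monomial (m2 i j) c : MvPolynomial (Fin 2) ℝ).totalDegree ≤ 6 := by
      intro i j c hij
      have hs : ((m2 i j).sum fun _ e => e) = i + j := by
        rw [sum2]; simp
      calc (monomial (m2 i j) c : MvPolynomial (Fin 2) ℝ).totalDegree
          ≤ (m2 i j).sum fun _ ↦ id := totalDegree_monomial_le _ _
        _ = i + j := hs
        _ ≤ 6 := hij
    rw [hfeq]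
    refine le_trans (totalDegree_add _ _) (max_le (le_trans (totalDegree_add _ _)
      (max_le (le_trans (totalDegree_add _ _) (max_le ?_ ?_)) ?_)) ?_) <;>
      [exact hm 4 2 1 (by norm_num); exact hm 2 4 1 (by norm_num);
       exact hm 2 2 (-3) (by norm_num); exact hm 0 0 1 (by norm_num)]
  have hdeg : ∀ i, (p i).totalDegree ≤ 3 := fun i => deg_le h hfd i
  -- vanishing of coefficients of total degree at least 4
  have hbig : ∀ i (a : Fin 2 →₀ ℕ), 4 ≤ a 0 + a 1 → coeff a (p i) = 0 := by
    intro i a ha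
    apply coeff_eq_zero_of_totalDegree_lt
    have h1 : (∑ x ∈ a.support, a x) = a 0 + a 1 := deg2 a
    have := hdeg i
    omega
  -- coefficients of the Motzkin polynomial
  have coeff_f : ∀ k l : ℕ, coeff (m2 k l) f =
      (if 4 = k ∧ 2 = l then (1:ℝ) else 0) + (if 2 = k ∧ 4 = l then 1 else 0)
      + (if 2 = k ∧ 2 = l then (-3) else 0) + (if 0 = k ∧ 0 = l then 1 else 0) := by
    intro k l
    rw [hfeq]
    simp only [coeff_add, coeff_monomial, m2_eq_iff]
  -- generalization helper
  have gen : ∀ (k l : ℕ), (∀ i, coeff (m2 k l) (p i) = 0) →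
      ∀ i (a : Fin 2 →₀ ℕ), a 0 = k → a 1 = l → coeff a (p i) = 0 := by
    intro k l hc i a h0 h1
    rw [show a = m2 k l from fin2_ext (by simp [h0]) (by simp [h1])]
    exact hc i
  -- chase (6,0)
  have c30 : ∀ i, coeff (m2 3 0) (p i) = 0 := by
    refine chase_zero p (m2 6 0) (m2 3 0) (by rw [m2_add]) ?_ ?_
    · intro i a b hab hne
      have e0 := DFunLike.congr_fun hab 0
      have e1 := DFunLike.congr_fun hab 1
      simp only [Finsupp.add_apply, m2_apply0, m2_apply1] at e0 e1
      by_cases h4a : 4 ≤ a 0 + a 1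
      · rw [hbig i a h4a, zero_mul]
      by_cases h4b : 4 ≤ b 0 + b 1
      · rw [hbig i b h4b, mul_zero]
      exact absurd ⟨fin2_ext (by simp; omega) (by simp; omega),
        fin2_ext (by simp; omega) (by simp; omega)⟩ hne
    · rw [← h, coeff_f]; norm_num
  have h30 := gen 3 0 c30
  -- chase (4,0)
  have c20 : ∀ i, coeff (m2 2 0) (p i) = 0 := by
    refine chase_zero p (m2 4 0) (m2 2 0) (by rw [m2_add]) ?_ ?_
    · intro i a b hab hne
      have e0 := DFunLike.congr_fun hab 0
      have e1 := DFunLike.congr_fun hab 1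
      simp only [Finsupp.add_apply, m2_apply0, m2_apply1] at e0 e1
      by_cases h4a : 4 ≤ a 0 + a 1
      · rw [hbig i a h4a, zero_mul]
      by_cases h4b : 4 ≤ b 0 + b 1
      · rw [hbig i b h4b, mul_zero]
      rcases (by omega : a 0 = 3 ∧ a 1 = 0 ∨ b 0 = 3 ∧ b 1 = 0 ∨
          (a 0 = 2 ∧ a 1 = 0 ∧ b 0 = 2 ∧ b 1 = 0)) with ⟨p1, p2⟩ | ⟨p1, p2⟩ | ⟨p1, p2, p3, p4⟩
      · rw [h30 i a p1 p2, zero_mul]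
      · rw [h30 i b p1 p2, mul_zero]
      · exact absurd ⟨fin2_ext (by simp [p1]) (by simp [p2]),
          fin2_ext (by simp [p3]) (by simp [p4])⟩ hne
    · rw [← h, coeff_f]; norm_num
  have h20 := gen 2 0 c20
  -- chase (2,0)
  have c10 : ∀ i, coeff (m2 1 0) (p i) = 0 := by
    refine chase_zero p (m2 2 0) (m2 1 0) (by rw [m2_add]) ?_ ?_
    · intro i a b hab hne
      have e0 := DFunLike.congr_fun hab 0
      have e1 := DFunLike.congr_fun hab 1
      simp only [Finsupp.add_apply, m2_apply0, m2_apply1] at e0 e1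
      rcases (by omega : a 0 = 2 ∧ a 1 = 0 ∨ b 0 = 2 ∧ b 1 = 0 ∨
          (a 0 = 1 ∧ a 1 = 0 ∧ b 0 = 1 ∧ b 1 = 0)) with ⟨p1, p2⟩ | ⟨p1, p2⟩ | ⟨p1, p2, p3, p4⟩
      · rw [h20 i a p1 p2, zero_mul]
      · rw [h20 i b p1 p2, mul_zero]
      · exact absurd ⟨fin2_ext (by simp [p1]) (by simp [p2]),
          fin2_ext (by simp [p3]) (by simp [p4])⟩ hne
    · rw [← h, coeff_f]; norm_num
  have h10 := gen 1 0 c10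
  -- chase (0,6)
  have c03 : ∀ i, coeff (m2 0 3) (p i) = 0 := by
    refine chase_zero p (m2 0 6) (m2 0 3) (by rw [m2_add]) ?_ ?_
    · intro i a b hab hne
      have e0 := DFunLike.congr_fun hab 0
      have e1 := DFunLike.congr_fun hab 1
      simp only [Finsupp.add_apply, m2_apply0, m2_apply1] at e0 e1
      by_cases h4a : 4 ≤ a 0 + a 1
      · rw [hbig i a h4a, zero_mul]
      by_cases h4b : 4 ≤ b 0 + b 1
      · rw [hbig i b h4b, mul_zero]
      exact absurd ⟨fin2_ext (by simp; omega) (by simp; omega),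
        fin2_ext (by simp; omega) (by simp; omega)⟩ hne
    · rw [← h, coeff_f]; norm_num
  have h03 := gen 0 3 c03
  -- chase (0,4)
  have c02 : ∀ i, coeff (m2 0 2) (p i) = 0 := by
    refine chase_zero p (m2 0 4) (m2 0 2) (by rw [m2_add]) ?_ ?_
    · intro i a b hab hne
      have e0 := DFunLike.congr_fun hab 0
      have e1 := DFunLike.congr_fun hab 1
      simp only [Finsupp.add_apply, m2_apply0, m2_apply1] at e0 e1
      by_cases h4a : 4 ≤ a 0 + a 1
      · rw [hbig i a h4a, zero_mul]
      by_cases h4b : 4 ≤ b 0 + b 1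
      · rw [hbig i b h4b, mul_zero]
      rcases (by omega : a 0 = 0 ∧ a 1 = 3 ∨ b 0 = 0 ∧ b 1 = 3 ∨
          (a 0 = 0 ∧ a 1 = 2 ∧ b 0 = 0 ∧ b 1 = 2)) with ⟨p1, p2⟩ | ⟨p1, p2⟩ | ⟨p1, p2, p3, p4⟩
      · rw [h03 i a p1 p2, zero_mul]
      · rw [h03 i b p1 p2, mul_zero]
      · exact absurd ⟨fin2_ext (by simp [p1]) (by simp [p2]),
          fin2_ext (by simp [p3]) (by simp [p4])⟩ hne
    · rw [← h, coeff_f]; norm_num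
  have h02 := gen 0 2 c02
  -- chase (0,2)
  have c01 : ∀ i, coeff (m2 0 1) (p i) = 0 := by
    refine chase_zero p (m2 0 2) (m2 0 1) (by rw [m2_add]) ?_ ?_
    · intro i a b hab hne
      have e0 := DFunLike.congr_fun hab 0
      have e1 := DFunLike.congr_fun hab 1
      simp only [Finsupp.add_apply, m2_apply0, m2_apply1] at e0 e1
      rcases (by omega : a 0 = 0 ∧ a 1 = 2 ∨ b 0 = 0 ∧ b 1 = 2 ∨
          (a 0 = 0 ∧ a 1 = 1 ∧ b 0 = 0 ∧ b 1 = 1)) with ⟨p1, p2⟩ | ⟨p1, p2⟩ | ⟨p1, p2, p3, p4⟩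
      · rw [h02 i a p1 p2, zero_mul]
      · rw [h02 i b p1 p2, mul_zero]
      · exact absurd ⟨fin2_ext (by simp [p1]) (by simp [p2]),
          fin2_ext (by simp [p3]) (by simp [p4])⟩ hne
    · rw [← h, coeff_f]; norm_num
  have h01 := gen 0 1 c01
  -- final chase at (2,2)
  have hfinal : coeff (m2 2 2) (∑ i, p i ^ 2) = ∑ i, (coeff (m2 1 1) (p i)) ^ 2 := by
    refine sum_sq_coeff p (m2 2 2) (m2 1 1) (by rw [m2_add]) ?_
    intro i a b hab hne
    have e0 := DFunLike.congr_fun hab 0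
    have e1 := DFunLike.congr_fun hab 1
    simp only [Finsupp.add_apply, m2_apply0, m2_apply1] at e0 e1
    by_cases h4a : 4 ≤ a 0 + a 1
    · rw [hbig i a h4a, zero_mul]
    by_cases h4b : 4 ≤ b 0 + b 1
    · rw [hbig i b h4b, mul_zero]
    rcases (by omega : (a 0 = 1 ∧ a 1 = 0) ∨ (a 0 = 2 ∧ a 1 = 0) ∨ (a 0 = 0 ∧ a 1 = 1) ∨
        (a 0 = 0 ∧ a 1 = 2) ∨ (b 0 = 1 ∧ b 1 = 0) ∨ (b 0 = 0 ∧ b 1 = 1) ∨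
        (a 0 = 1 ∧ a 1 = 1 ∧ b 0 = 1 ∧ b 1 = 1)) with
      ⟨p1, p2⟩ | ⟨p1, p2⟩ | ⟨p1, p2⟩ | ⟨p1, p2⟩ | ⟨p1, p2⟩ | ⟨p1, p2⟩ | ⟨p1, p2, p3, p4⟩
    · rw [h10 i a p1 p2, zero_mul]
    · rw [h20 i a p1 p2, zero_mul]
    · rw [h01 i a p1 p2, zero_mul]
    · rw [h02 i a p1 p2, zero_mul]
    · rw [h10 i b p1 p2, mul_zero]
    · rw [h01 i b p1 p2, mul_zero]
    · exact absurd ⟨fin2_ext (by simp [p1]) (by simp [p2]),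
        fin2_ext (by simp [p3]) (by simp [p4])⟩ hne
  have hm3 : (-3 : ℝ) = ∑ i, (coeff (m2 1 1) (p i)) ^ 2 := by
    rw [← hfinal, ← h, coeff_f]
    norm_num
  have hnn : (0:ℝ) ≤ ∑ i, (coeff (m2 1 1) (p i)) ^ 2 :=
    Finset.sum_nonneg fun i _ => sq_nonneg _
  linarith
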